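/- The spectral radius of the simple random walk on the free group F_d (d ≥ 2) with 2d generators satisfies ρ ≥ √(2d−1)/d. (Deduced from the identity ⟨Qu_α,u_α⟩ = α(2d−1)/d · ⟨u_α,u_α⟩ valid for all α < 1/√(2d−1), and ρ = ‖Q‖ since Q is self-adjoint.) -/

import Mathlib

open scoped BigOperators

open FreeGroup List
open scoped ENNReal NNReal


variable {A : Type*} [DecidableEq A]

/-- tail of a reduced word is reduced -/
lemma reduce_tail {h : A × Bool} {t : List (A × Bool)} (hr : reduce (h :: t) = h :: t) :
    reduce t = t := by
  have hc := FreeGroup.reduce.cons (L := t) h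
  rcases hM : reduce t with _ | ⟨m, M⟩
  · rw [hM] at hc; rw [hr] at hc
    dsimp only at hc
    simpa using hc.symm
  · rw [hM] at hc; rw [hr] at hc
    dsimp only at hc
    by_cases hcond : h.1 = m.1 ∧ h.2 = !m.2
    · rw [if_pos hcond] at hc
      have hlen : (reduce t).length ≤ t.length := (FreeGroup.reduce.red (L := t)).length_le
      rw [hM] at hlen
      have : (h :: t).length = M.length := by rw [hc]
      simp at this hlen
      omega
    · rw [if_neg hcond] at hc
      have ht : t = m :: M := by injection hc
      rw [ht, ← hM, ht]

/-- cons of a non-cancelling letter to a reduced word is reduced -/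
lemma reduce_cons_of_ne {l h : A × Bool} {t : List (A × Bool)} (hr : reduce (h :: t) = h :: t)
    (hne : ¬(l.1 = h.1 ∧ l.2 = !h.2)) : reduce (l :: h :: t) = l :: h :: t := by
  have hc := FreeGroup.reduce.cons (L := h :: t) l
  rw [hr] at hc
  dsimp only at hc
  rwa [if_neg hne] at hc

/-- cons of the cancelling letter deletes the head -/
lemma reduce_cons_of_eq {h : A × Bool} {t : List (A × Bool)} (hr : reduce (h :: t) = h :: t) :
    reduce ((h.1, !h.2) :: h :: t) = t := by
  have hc := FreeGroup.reduce.cons (L := h :: t) (h.1, !h.2)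
  rw [hr] at hc
  dsimp only at hc
  simpa using hc

variable {A : Type*} [DecidableEq A] [Fintype A]

/-- Finset of reduced words of length `k`. -/
def RWs (A : Type*) [DecidableEq A] [Fintype A] : ℕ → Finset (List (A × Bool))
  | 0 => {[]}
  | (k+1) => (RWs A k).biUnion (fun w =>
      (Finset.univ.filter (fun l : A × Bool => reduce (l :: w) = l :: w)).image (· :: w))

lemma mem_RWs (k : ℕ) (w : List (A × Bool)) :
    w ∈ RWs A k ↔ reduce w = w ∧ w.length = k := by
  induction k generalizing w with
  | zero =>
    simp only [RWs, Finset.mem_singleton, List.length_eq_zero_iff]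
    constructor
    · rintro rfl; exact ⟨rfl, rfl⟩
    · rintro ⟨_, rfl⟩; rfl
  | succ k ih =>
    simp only [RWs, Finset.mem_biUnion, Finset.mem_image, Finset.mem_filter, Finset.mem_univ,
      true_and]
    constructor
    · rintro ⟨t, ht, l, hl, rfl⟩
      exact ⟨hl, by simp [(ih t).mp ht |>.2]⟩
    · rintro ⟨hred, hlen⟩
      rcases w with _ | ⟨l, t⟩
      · simp at hlen
      · refine ⟨t, (ih t).mpr ⟨reduce_tail hred, by simpa using hlen⟩, l, hred, rfl⟩

lemma card_RWs_zero : (RWs A 0).card = 1 := rfl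

lemma card_RWs_one : (RWs A 1).card = Fintype.card A * 2 := by
  classical
  have : RWs A 1 = Finset.univ.image (fun l : A × Bool => [l]) := by
    ext w
    simp only [mem_RWs, Finset.mem_image, Finset.mem_univ, true_and, List.length_eq_one_iff]
    constructor
    · rintro ⟨_, a, rfl⟩; exact ⟨a, rfl⟩
    · rintro ⟨a, rfl⟩; exact ⟨FreeGroup.reduce_singleton a, ⟨a, rfl⟩⟩
  rw [this, Finset.card_image_of_injective _ (fun a b h => by injection h)]
  simp [Fintype.card_prod]

lemma card_RWs_succ (k : ℕ) (hk : 1 ≤ k) :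
    (RWs A (k+1)).card = (RWs A k).card * (Fintype.card A * 2 - 1) := by
  rw [show RWs A (k+1) = (RWs A k).biUnion (fun w =>
      (Finset.univ.filter (fun l : A × Bool => reduce (l :: w) = l :: w)).image (· :: w)) from rfl]
  rw [Finset.card_biUnion]
  · rw [Finset.sum_congr rfl (fun w hw => ?_), Finset.sum_const, smul_eq_mul]
    -- per-word extension count is 2|A| - 1
    obtain ⟨hred, hlen⟩ := (mem_RWs k w).mp hw
    rcases w with _ | ⟨h, t⟩
    · simp at hlen; omega
    rw [Finset.card_image_of_injective _ (fun a b hab => by injection hab)]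
    have hfilter : Finset.univ.filter (fun l : A × Bool => reduce (l :: h :: t) = l :: h :: t)
        = Finset.univ.erase (h.1, !h.2) := by
      ext l
      simp only [Finset.mem_filter, Finset.mem_univ, true_and, Finset.mem_erase, and_true]
      constructor
      · rintro hredl rfl
        have := reduce_cons_of_eq hred
        rw [hredl] at this
        have hL := congrArg List.length this
        simp at hL
        omega
      · intro hne
        refine reduce_cons_of_ne hred (fun hc => hne ?_)
        exact Prod.ext hc.1 hc.2
    rw [hfilter, Finset.card_erase_of_mem (Finset.mem_univ _)]
    simp [Fintype.card_prod, Nat.mul_comm]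
  · intro a ha b hb hab
    simp only [Finset.disjoint_left, Finset.mem_image, Finset.mem_filter]
    rintro w ⟨l, _, rfl⟩ ⟨l', _, h⟩
    exact hab (by injection h; simp_all)

lemma card_RWs (k : ℕ) (hk : 1 ≤ k) :
    (RWs A k).card = Fintype.card A * 2 * (Fintype.card A * 2 - 1)^(k-1) := by
  induction k with
  | zero => omega
  | succ k ih =>
    rcases Nat.eq_or_lt_of_le hk with h | h
    · rw [← h]; simpa using card_RWs_one
    · have hk1 : 1 ≤ k := by omega
      rw [card_RWs_succ k hk1, ih hk1]
      rw [show k + 1 - 1 = (k-1) + 1 from by omega, pow_succ]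
      ring


variable {d : ℕ}

/-- sphere of radius k in the free group -/
noncomputable def SQ (d : ℕ) (k : ℕ) : Finset (FreeGroup (Fin d)) :=
  (RWs (Fin d) k).image FreeGroup.mk

lemma mem_SQ {k : ℕ} {x : FreeGroup (Fin d)} : x ∈ SQ d k ↔ x.toWord.length = k := by
  classical
  simp only [SQ, Finset.mem_image, mem_RWs]
  constructor
  · rintro ⟨w, ⟨hred, hlen⟩, rfl⟩
    rw [toWord_mk, hred]; exact hlen
  · intro hlen
    exact ⟨x.toWord, ⟨reduce_toWord x, hlen⟩, mk_toWord⟩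

lemma card_SQ (k : ℕ) (hk : 1 ≤ k) : (SQ d k).card = d * 2 * (d * 2 - 1)^(k-1) := by
  classical
  rw [SQ, Finset.card_image_of_injOn, card_RWs k hk, Fintype.card_fin]
  rintro a ha b hb hab
  have := congrArg FreeGroup.toWord hab
  rwa [toWord_mk, toWord_mk, ((mem_RWs k a).mp ha).1, ((mem_RWs k b).mp hb).1] at this

lemma card_SQ_zero : (SQ d 0).card = 1 := by
  classical
  rw [SQ, Finset.card_image_of_injOn, card_RWs_zero]
  rintro a ha b hb hab
  have := congrArg FreeGroup.toWord hab
  rwa [toWord_mk, toWord_mk, ((mem_RWs 0 a).mp ha).1, ((mem_RWs 0 b).mp hb).1] at this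

/-- Key neighbor computation. -/
lemma neighbor_sum (g : ℕ → ℝ) {k : ℕ} (hk : 1 ≤ k) (x : FreeGroup (Fin d))
    (hx : x.toWord.length = k) :
    ∑ i : Fin d, (g ((x * FreeGroup.of i).toWord.length)
        + g ((x * (FreeGroup.of i)⁻¹).toWord.length))
      = g (k-1) + (d * 2 - 1 : ℕ) * g (k+1) := by
  classical
  set u := x⁻¹.toWord with hu
  have hured : reduce u = u := reduce_toWord _
  have hulen : u.length = k := by
    rw [hu, toWord_inv, invRev_length, hx]
  have hinv : x⁻¹ = FreeGroup.mk u := (mk_toWord).symm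
  -- lengths via inversion
  have key2 : ∀ (a : Fin d) (b : Bool), ((x * FreeGroup.mk [(a, b)])).toWord.length
      = (reduce ((a, !b) :: u)).length := by
    intro a b
    have : (x * FreeGroup.mk [(a, b)])⁻¹ = FreeGroup.mk ((a, !b) :: u) := by
      rw [mul_inv_rev, inv_mk, hinv, mul_mk]
      congr 1
    have h2 := congrArg (fun z => z.toWord.length) this
    simp only [toWord_mk] at h2
    rw [← h2, toWord_inv, invRev_length]
  have hstep : ∑ i : Fin d, (g ((x * FreeGroup.of i).toWord.length)
        + g ((x * (FreeGroup.of i)⁻¹).toWord.length))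
      = ∑ l : Fin d × Bool, g ((reduce (l :: u)).length) := by
    rw [Fintype.sum_prod_type]
    refine Finset.sum_congr rfl (fun i _ => ?_)
    rw [Fintype.sum_bool]
    have h1 : (x * FreeGroup.of i).toWord.length = (reduce ((i, false) :: u)).length := by
      have := key2 i true
      exact this
    have h2 : (x * (FreeGroup.of i)⁻¹).toWord.length = (reduce ((i, true) :: u)).length := by
      have h3 : (FreeGroup.of i)⁻¹ = FreeGroup.mk [(i, false)] := by
        rw [show FreeGroup.of i = FreeGroup.mk [(i, true)] from rfl, inv_mk]
        congr 1
      rw [h3]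
      have := key2 i false
      simpa using this
    rw [h1, h2, add_comm]
  rw [hstep]
  -- now split off the cancelling letter
  rcases hu' : u with _ | ⟨h, t⟩
  · rw [hu'] at hulen; simp at hulen; omega
  rw [hu'] at hured
  have hcard : (Finset.univ.erase (h.1, !h.2)).card = d * 2 - 1 := by
    rw [Finset.card_erase_of_mem (Finset.mem_univ _)]
    simp [Fintype.card_prod]
  rw [← Finset.add_sum_erase _ _ (Finset.mem_univ (h.1, !h.2))]
  congr 1
  · rw [show ((h.1, !h.2) : Fin d × Bool) = ((h.1), !(h.2)) from rfl, reduce_cons_of_eq hured]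
    have : t.length = k - 1 := by
      rw [hu'] at hulen; simp at hulen; omega
    rw [this]
  · rw [Finset.sum_congr rfl (fun l hl => ?_), Finset.sum_const, hcard, nsmul_eq_mul]
    have hlne : l ≠ (h.1, !h.2) := (Finset.mem_erase.mp hl).1
    have : reduce (l :: h :: t) = l :: h :: t := by
      refine reduce_cons_of_ne hured (fun hc => hlne (Prod.ext hc.1 hc.2))
    rw [this]
    have : (l :: h :: t).length = k + 1 := by
      rw [hu'] at hulen; simp at hulen ⊢; omega
    rw [this]


/-- The spectral radius (norm) of the simple random walk operator on `ℓ²(F_d)` (`d ≥ 2`)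
satisfies `ρ = ‖Q‖ ≥ √(2d-1)/d`. -/
theorem stmt_12 (d : ℕ) (hd : 2 ≤ d)
    (Q : lp (fun _ : FreeGroup (Fin d) => ℝ) 2 →L[ℝ] lp (fun _ : FreeGroup (Fin d) => ℝ) 2)
    (hQ : ∀ (f : lp (fun _ : FreeGroup (Fin d) => ℝ) 2) (x : FreeGroup (Fin d)),
      (Q f : ∀ _ : FreeGroup (Fin d), ℝ) x = (1 / (2 * d)) * ∑ i : Fin d,
        ((f : ∀ _ : FreeGroup (Fin d), ℝ) (x * FreeGroup.of i) +
         (f : ∀ _ : FreeGroup (Fin d), ℝ) (x * (FreeGroup.of i)⁻¹))) :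
    Real.sqrt (2 * d - 1) / d ≤ ‖Q‖ := by
  classical
  have hdR2 : (2:ℝ) ≤ (d:ℝ) := by exact_mod_cast hd
  have hdpos : (0:ℝ) < (d:ℝ) := by linarith
  set q : ℝ := 2 * (d:ℝ) - 1 with hqdef
  have hqpos : (0:ℝ) < q := by rw [hqdef]; linarith
  set r : ℝ := Real.sqrt q with hrdef
  have hr2 : r ^ 2 = q := Real.sq_sqrt hqpos.le
  have hrpos : 0 < r := Real.sqrt_pos.mpr hqpos
  set β : ℝ := r⁻¹ with hβdef
  have hβpos : 0 < β := inv_pos.mpr hrpos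
  have hβ2 : β ^ 2 = q⁻¹ := by rw [hβdef, inv_pow, hr2]
  have hqβ : q * β ^ 2 = 1 := by rw [hβ2]; exact mul_inv_cancel₀ hqpos.ne'
  have hqnat : ((d * 2 - 1 : ℕ) : ℝ) = q := by
    have h1 : (1:ℕ) ≤ d * 2 := by omega
    rw [Nat.cast_sub h1, hqdef]; push_cast; ring
  have htwo : (0:ℝ) < (2:ℝ≥0∞).toReal := by simp
  have htoReal : (2:ℝ≥0∞).toReal = 2 := by simp
  have hrpow : ∀ a : ℝ, ‖a‖ ^ (2:ℝ≥0∞).toReal = a ^ 2 := by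
    intro a
    rw [htoReal, show (2:ℝ) = ((2:ℕ):ℝ) by norm_num, Real.rpow_natCast, Real.norm_eq_abs,
      sq_abs]
  -- sphere disjointness
  have hdisj : ∀ (s : Finset ℕ), (s : Set ℕ).PairwiseDisjoint (SQ d) := by
    intro s k _ l _ hkl
    refine Finset.disjoint_left.mpr (fun x hx1 hx2 => hkl ?_)
    rw [← mem_SQ.mp hx1, ← mem_SQ.mp hx2]
  have hcast1 : ∀ k : ℕ, ((SQ d (k+1)).card : ℝ) = 2 * (d:ℝ) * q ^ k := by
    intro k
    rw [card_SQ (k+1) (by omega), Nat.add_sub_cancel, Nat.cast_mul, Nat.cast_pow, hqnat,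
      Nat.cast_mul]
    push_cast; ring
  -- main inequality for each n
  have key : ∀ n : ℕ, 2 * (n:ℝ) / (d:ℝ) ≤ ‖Q‖^2 * (1 + 2*(d:ℝ)*((n:ℝ)+1)/q) := by
    intro n
    set g : ℕ → ℝ := fun k => if k ≤ n+1 then β ^ k else 0 with hg
    set F : (∀ _ : FreeGroup (Fin d), ℝ) := fun x => g (x.toWord.length) with hF
    set ball : Finset (FreeGroup (Fin d)) := (Finset.range (n+2)).biUnion (SQ d) with hball
    have hsupp : ∀ x, x ∉ ball → F x = 0 := by
      intro x hx
      have hlen : ¬ (x.toWord.length ≤ n + 1) := by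
        intro hle
        exact hx (Finset.mem_biUnion.mpr ⟨x.toWord.length, Finset.mem_range.mpr (by omega),
          mem_SQ.mpr rfl⟩)
      simp [hF, hg, hlen]
    have hmem : Memℓp F 2 := by
      apply memℓp_gen
      apply summable_of_ne_finset_zero (s := ball)
      intro x hx
      rw [hsupp x hx]
      simp [Real.zero_rpow (by simp : (2:ℝ≥0∞).toReal ≠ 0)]
    set f : lp (fun _ : FreeGroup (Fin d) => ℝ) 2 := ⟨F, hmem⟩ with hf
    have hfapp : ∀ x, (f : ∀ _ : FreeGroup (Fin d), ℝ) x = F x := fun _ => rfl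
    -- norm of f
    have hfnorm : ‖f‖ ^ 2 = 1 + 2*(d:ℝ)*((n:ℝ)+1)/q := by
      have h1 := lp.norm_rpow_eq_tsum htwo f
      rw [htoReal] at h1
      rw [show ‖f‖ ^ (2:ℕ) = ‖f‖ ^ (2:ℝ) by
        rw [show (2:ℝ) = ((2:ℕ):ℝ) by norm_num, Real.rpow_natCast]]
      rw [h1]
      have h2 : ∑' x, ‖(f : ∀ _ : FreeGroup (Fin d), ℝ) x‖ ^ (2:ℝ)
          = ∑ x ∈ ball, (F x)^2 := by
        rw [tsum_eq_sum (s := ball) (fun x hx => by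
          rw [hfapp, hsupp x hx]; simp [Real.zero_rpow (by norm_num : (2:ℝ) ≠ 0)])]
        refine Finset.sum_congr rfl (fun x _ => ?_)
        rw [hfapp, show ((2:ℝ)) = ((2:ℕ):ℝ) by norm_num, Real.rpow_natCast, Real.norm_eq_abs,
          sq_abs]
      rw [h2, hball, Finset.sum_biUnion (hdisj _)]
      have h3 : ∀ k ∈ Finset.range (n+2), ∑ x ∈ SQ d k, (F x)^2
          = ((SQ d k).card : ℝ) * (β ^ k)^2 := by
        intro k hk
        have hkr : k < n + 2 := Finset.mem_range.mp hk
        rw [Finset.sum_congr rfl (fun x hx => ?_), Finset.sum_const, nsmul_eq_mul]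
        have : x.toWord.length = k := mem_SQ.mp hx
        simp only [hF, hg, this]
        rw [if_pos (by omega : k ≤ n+1)]
      rw [Finset.sum_congr rfl h3, Finset.sum_range_succ']
      have h4 : ∀ k, ((SQ d (k+1)).card : ℝ) * (β ^ (k+1))^2 = 2 * (d:ℝ) / q := by
        intro k
        have e1 : (β ^ (k+1))^2 = (β^2)^(k+1) := by
          rw [← pow_mul, mul_comm, pow_mul]
        rw [hcast1 k, e1, hβ2, pow_succ]
        rw [show 2*(d:ℝ)*q^k * ((q⁻¹)^k * q⁻¹) = 2*(d:ℝ) * (q*q⁻¹)^k * q⁻¹ from by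
          rw [mul_pow]; ring]
        rw [mul_inv_cancel₀ hqpos.ne', one_pow, div_eq_mul_inv]
        ring
      rw [Finset.sum_congr rfl (fun k _ => h4 k), Finset.sum_const, card_SQ_zero]
      push_cast
      simp
      ring
    -- lower bound for ‖Q f‖
    set mid : Finset (FreeGroup (Fin d)) := (Finset.Icc 1 n).biUnion (SQ d) with hmid
    have hQval : ∀ k, 1 ≤ k → k ≤ n → ∀ x ∈ SQ d k,
        (Q f : ∀ _ : FreeGroup (Fin d), ℝ) x = β^(k-1) / (d:ℝ) := by
      intro k hk1 hkn x hx
      rw [hQ f x]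
      have hns := neighbor_sum (d := d) g hk1 x (mem_SQ.mp hx)
      have hsumeq : ∑ i : Fin d, ((f : ∀ _ : FreeGroup (Fin d), ℝ) (x * FreeGroup.of i) +
          (f : ∀ _ : FreeGroup (Fin d), ℝ) (x * (FreeGroup.of i)⁻¹))
          = g (k-1) + (d * 2 - 1 : ℕ) * g (k+1) := by
        rw [← hns]
      rw [hsumeq, hqnat]
      have hg1 : g (k-1) = β^(k-1) := by rw [hg]; simp only; rw [if_pos (by omega)]
      have hg2 : g (k+1) = β^(k+1) := by rw [hg]; simp only; rw [if_pos (by omega)]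
      rw [hg1, hg2]
      have hexp : β^(k+1) = β^(k-1) * β^2 := by
        rw [← pow_add]
        congr 1
        omega
      rw [hexp, ← mul_assoc, mul_comm q (β^(k-1)), mul_assoc, hqβ, mul_one]
      field_simp
      ring
    have hlow : 2 * (n:ℝ) / (d:ℝ) ≤ ‖Q f‖ ^ 2 := by
      have h5 := lp.sum_rpow_le_norm_rpow htwo (Q f) mid
      have h6 : ∑ x ∈ mid, ‖(Q f : ∀ _ : FreeGroup (Fin d), ℝ) x‖ ^ (2:ℝ≥0∞).toReal
          = 2 * (n:ℝ) / (d:ℝ) := by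
        rw [hmid, Finset.sum_biUnion (hdisj _)]
        have h7 : ∀ k ∈ Finset.Icc 1 n, ∑ x ∈ SQ d k,
            ‖(Q f : ∀ _ : FreeGroup (Fin d), ℝ) x‖ ^ (2:ℝ≥0∞).toReal = 2 / (d:ℝ) := by
          intro k hk
          obtain ⟨hk1, hkn⟩ := Finset.mem_Icc.mp hk
          have hcard : ((SQ d k).card : ℝ) = 2 * (d:ℝ) * q ^ (k-1) := by
            have h' := hcast1 (k-1)
            rwa [show k - 1 + 1 = k from by omega] at h'
          have hterm : ∀ x ∈ SQ d k, ‖(Q f : ∀ _ : FreeGroup (Fin d), ℝ) x‖ ^ (2:ℝ≥0∞).toReal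
              = (β^(k-1)/(d:ℝ))^2 := fun x hx => by rw [hrpow, hQval k hk1 hkn x hx]
          rw [Finset.sum_congr rfl hterm, Finset.sum_const, nsmul_eq_mul, hcard]
          rw [div_pow, ← pow_mul, show (k-1)*2 = 2*(k-1) from by ring, pow_mul, hβ2]
          rw [show (2 * (d:ℝ) * q ^ (k-1)) * ((q⁻¹)^(k-1) / (d:ℝ)^2)
            = 2 * (d:ℝ) * (q * q⁻¹)^(k-1) / (d:ℝ)^2 / q^(k-1) * q^(k-1) from by
              rw [mul_pow]; field_simp]
          rw [mul_inv_cancel₀ hqpos.ne', one_pow]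
          field_simp
        rw [Finset.sum_congr rfl h7, Finset.sum_const, nsmul_eq_mul, Nat.card_Icc]
        simp
        ring
      rw [h6] at h5
      calc 2 * (n:ℝ) / (d:ℝ) ≤ ‖Q f‖ ^ (2:ℝ≥0∞).toReal := h5
        _ = ‖Q f‖ ^ 2 := by
            rw [htoReal, show (2:ℝ) = ((2:ℕ):ℝ) by norm_num, Real.rpow_natCast]
    have hop : ‖Q f‖ ^ 2 ≤ ‖Q‖^2 * ‖f‖^2 := by
      rw [← mul_pow]
      exact pow_le_pow_left₀ (norm_nonneg _) (Q.le_opNorm f) 2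
    calc 2 * (n:ℝ) / (d:ℝ) ≤ ‖Q f‖ ^ 2 := hlow
      _ ≤ ‖Q‖^2 * ‖f‖^2 := hop
      _ = ‖Q‖^2 * (1 + 2*(d:ℝ)*((n:ℝ)+1)/q) := by rw [hfnorm]
  -- conclude from the family of inequalities
  have hN : q / (d:ℝ)^2 ≤ ‖Q‖^2 := by
    by_contra hcon
    push_neg at hcon
    set N : ℝ := ‖Q‖^2 with hNdef
    have hN0 : 0 ≤ N := sq_nonneg _
    -- key n : 2n/d ≤ N (1 + 2d(n+1)/q) i.e. n (2/d - 2dN/q) ≤ N + 2dN/q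
    have ha : 0 < 2/(d:ℝ) - 2*(d:ℝ)*N/q := by
      have h1 : N * (d:ℝ)^2 < q := by
        rw [lt_div_iff₀ (by positivity : (0:ℝ) < (d:ℝ)^2)] at hcon
        exact hcon
      have h2 : 2*(d:ℝ)*N/q < 2/(d:ℝ) := by
        rw [div_lt_div_iff₀ hqpos hdpos]
        nlinarith
      linarith
    obtain ⟨n, hn⟩ := exists_nat_gt ((N + 2*(d:ℝ)*N/q) / (2/(d:ℝ) - 2*(d:ℝ)*N/q))
    have h8 := key n
    rw [div_lt_iff₀ ha] at hn
    have h9 : 2 * (n:ℝ) / (d:ℝ) = (n:ℝ) * (2/(d:ℝ)) := by ring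
    have h10 : ‖Q‖^2 * (1 + 2*(d:ℝ)*((n:ℝ)+1)/q) = N + 2*(d:ℝ)*N/q + (n:ℝ)*(2*(d:ℝ)*N/q) := by
      rw [← hNdef]; field_simp; ring
    rw [h9, h10] at h8
    nlinarith
  have hfinal : (r / (d:ℝ))^2 ≤ ‖Q‖^2 := by
    rw [div_pow, hr2]
    exact hN
  have h1 : Real.sqrt ((r/(d:ℝ))^2) ≤ Real.sqrt (‖Q‖^2) := Real.sqrt_le_sqrt hfinal
  rwa [Real.sqrt_sq (by positivity), Real.sqrt_sq (norm_nonneg _)] at h1
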